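/- Let H be a graph, 𝒳 a clustering of H (partition into cliques), and suppose col(H/𝒳) ≤ c and every block of 𝒳 has size at most ω(H). Then col(H) ≤ c · ω(H). In particular, for an induced subgraph H of G^d with clustering 𝒳 satisfying col(G^d/𝒳) ≤ wcol_{2d}(G), one gets col(H) ≤ wcol_{2d}(G) · ω(H). -/

import Mathlib

open SimpleGraph Set

variable {V : Type*}

/-- The `d`-th power of a graph: distinct vertices adjacent iff joined by a walk
of length at most `d`. -/
def gpow (G : SimpleGraph V) (d : ℕ) : SimpleGraph V where
  Adj u v := u ≠ v ∧ ∃ p : G.Walk u v, p.length ≤ d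
  symm := ⟨by
    rintro u v ⟨h, p, hp⟩
    exact ⟨h.symm, p.reverse, by simpa using hp⟩⟩
  loopless := ⟨by rintro u ⟨h, _⟩; exact h rfl⟩

/-- `v` is weakly `r`-reachable from `u` with respect to the ordering `σ`:
there is a path (walk) of length at most `r` from `u` to `v` all of whose
vertices are `≥_σ v`. -/
def wreach (G : SimpleGraph V) (σ : V → ℕ) (r : ℕ) (u v : V) : Prop :=
  ∃ p : G.Walk u v, p.length ≤ r ∧ ∀ x ∈ p.support, σ v ≤ σ x

/-- The weak `r`-coloring number of the ordering `σ`. -/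
noncomputable def wcolOrd (G : SimpleGraph V) (σ : V → ℕ) (r : ℕ) : ℕ :=
  sSup { n | ∃ u, n = {v | wreach G σ r u v}.ncard }

/-- The weak `r`-coloring number of `G`: minimum over (injective) vertex orderings. -/
noncomputable def wcol (G : SimpleGraph V) (r : ℕ) : ℕ :=
  sInf { c | ∃ σ : V → ℕ, Function.Injective σ ∧ wcolOrd G σ r = c }

/-- The coloring number of the ordering `σ`: max over vertices of one plus
the number of earlier neighbors. -/
noncomputable def colOrd (G : SimpleGraph V) (σ : V → ℕ) : ℕ :=
  sSup { n | ∃ u, n = 1 + {v | G.Adj u v ∧ σ v < σ u}.ncard }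

/-- The coloring number of `G` (one plus degeneracy). -/
noncomputable def colNum (G : SimpleGraph V) : ℕ :=
  sInf { c | ∃ σ : V → ℕ, Function.Injective σ ∧ colOrd G σ = c }

/-- Maximum degree. -/
noncomputable def maxDeg (G : SimpleGraph V) : ℕ :=
  sSup { n | ∃ u, n = (G.neighborSet u).ncard }

/-- Clique number. -/
noncomputable def cliqueNum' (G : SimpleGraph V) : ℕ :=
  sSup { n | ∃ s : Finset V, G.IsNClique n s }

/-- A clustering of `H`: a partition of the vertex set into cliques. -/
def IsClustering (H : SimpleGraph V) (𝒳 : Set (Set V)) : Prop :=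
  Setoid.IsPartition 𝒳 ∧ ∀ A ∈ 𝒳, H.IsClique A

/-- The quotient graph `H/𝒳`: blocks are vertices, distinct blocks adjacent iff some
pair of their elements is adjacent in `H`. -/
def quotGraph (H : SimpleGraph V) (𝒳 : Set (Set V)) : SimpleGraph 𝒳 where
  Adj A B := A ≠ B ∧ ∃ a ∈ (A : Set V), ∃ b ∈ (B : Set V), H.Adj a b
  symm := ⟨by
    rintro A B ⟨hne, a, ha, b, hb, hab⟩
    exact ⟨hne.symm, b, hb, a, ha, hab.symm⟩⟩
  loopless := ⟨by rintro A ⟨h, _⟩; exact h rfl⟩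

/-- `S` induces a disjoint union of complete graphs in `H`
(adjacency is transitive on `S`). -/
def IsClusterSet (H : SimpleGraph V) (S : Set V) : Prop :=
  ∀ a ∈ S, ∀ b ∈ S, ∀ c ∈ S, H.Adj a b → H.Adj b c → a ≠ c → H.Adj a c

/-- The subchromatic number: least `c` admitting a `c`-coloring in which every color
class induces a disjoint union of complete graphs. -/
noncomputable def subchrom (H : SimpleGraph V) : ℕ :=
  sInf { c | ∃ f : V → Fin c, ∀ i, IsClusterSet H (f ⁻¹' {i}) }

/-- A semi-ladder of length `k`: `x i` non-adjacent to `y i`, while `x i` adjacent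
to `y j` whenever `i < j`. -/
def IsSemiLadder (H : SimpleGraph V) {k : ℕ} (x y : Fin k → V) : Prop :=
  (∀ i, ¬ H.Adj (x i) (y i)) ∧ ∀ i j, i < j → H.Adj (x i) (y j)

/-- The semi-ladder index of `H` is at most `q`. -/
def semiLadderIndexLE (H : SimpleGraph V) (q : ℕ) : Prop :=
  ∀ (k : ℕ) (x y : Fin k → V), IsSemiLadder H x y → k ≤ q

/-- Closed neighborhood. -/
def closedNbhd (H : SimpleGraph V) (a : V) : Set V := insert a (H.neighborSet a)

/-- Treedepth at most `k`, via a forest (ancestor) order: a strict partial order in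
which ancestors of each vertex form a chain of size `< k`, and every edge joins a
comparable pair. -/
def treedepthLE (G : SimpleGraph V) (k : ℕ) : Prop :=
  ∃ A : V → V → Prop,
    (∀ u v w, A u v → A v w → A u w) ∧ (∀ v, ¬ A v v) ∧
    (∀ a b v, A a v → A b v → a = b ∨ A a b ∨ A b a) ∧
    (∀ u v, G.Adj u v → A u v ∨ A v u) ∧
    (∀ v, {a | A a v}.ncard < k)
lemma aux_ncard_le_mul {α β : Type*} [Finite α] [Finite β] (s : Set α) (f : α → β) (t : Set β)
    (hf : ∀ a ∈ s, f a ∈ t) (n : ℕ) (hn : ∀ b, {a | a ∈ s ∧ f a = b}.ncard ≤ n) :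
    s.ncard ≤ n * t.ncard := by
  classical
  haveI := Fintype.ofFinite α
  haveI := Fintype.ofFinite β
  rw [Set.ncard_eq_toFinset_card' s, Set.ncard_eq_toFinset_card' t]
  refine Finset.card_le_mul_card_image_of_maps_to (f := f) ?_ n ?_
  · intro a ha; rw [Set.mem_toFinset] at ha ⊢; exact hf a ha
  · intro b _
    have h := hn b
    rw [Set.ncard_eq_toFinset_card'] at h
    refine le_trans (le_of_eq ?_) h
    congr 1
    ext a
    simp

/-- If 𝒳 is a clustering of H with col(H/𝒳) ≤ c and all blocks of size ≤ m,
then col(H) ≤ c·m. -/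
theorem stmt15 [Fintype V] (H : SimpleGraph V) (𝒳 : Set (Set V)) (c m : ℕ)
    (hX : IsClustering H 𝒳) (hc : colNum (quotGraph H 𝒳) ≤ c)
    (hm : ∀ A ∈ 𝒳, A.ncard ≤ m) :
    colNum H ≤ c * m := by
  classical
  rcases isEmpty_or_nonempty V with hV | hV
  · -- empty case
    have h0 : colOrd H (fun _ => 0) = 0 := by
      have hs : colOrd H (fun _ => 0) = sSup (∅ : Set ℕ) := by
        unfold colOrd; congr 1; ext n; simp
      rw [hs, csSup_empty]
      simp
    have : colNum H ≤ 0 :=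
      Nat.sInf_le ⟨fun _ => 0, fun a => isEmptyElim a, h0⟩
    omega
  -- block map
  obtain ⟨hpart, hclq⟩ := hX
  choose f hf using fun v => (hpart.2 v).exists
  set blk : V → 𝒳 := fun v => ⟨f v, (hf v).1⟩ with hblk
  have hmemblk : ∀ v, v ∈ (blk v : Set V) := fun v => (hf v).2
  -- an optimal ordering of the quotient
  have hQfin : Finite ↥𝒳 := Subtype.finite
  obtain ⟨ι, hι⟩ := exists_injective_nat ↥𝒳
  have hne : { k | ∃ σ : ↥𝒳 → ℕ, Function.Injective σ ∧ colOrd (quotGraph H 𝒳) σ = k }.Nonempty :=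
    ⟨_, ι, hι, rfl⟩
  obtain ⟨σQ, hσQinj, hσQ⟩ := Nat.sInf_mem hne
  have hcolQ : colOrd (quotGraph H 𝒳) σQ ≤ c := hσQ.trans_le hc
  -- the refined ordering on V
  set N := Fintype.card V with hN
  have hNpos : 0 < N := Fintype.card_pos
  set e : V → ℕ := fun v => (Fintype.equivFin V v : ℕ) with he
  have heinj : Function.Injective e := fun a b h => by
    have := Fin.val_injective h  -- maybe wrong; fix below
    exact (Fintype.equivFin V).injective this
  have heb : ∀ v, e v < N := fun v => (Fintype.equivFin V v).isLt
  set τ : V → ℕ := fun v => e v + σQ (blk v) * N with hτ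
  have hτinj : Function.Injective τ := by
    intro a b h
    apply heinj
    have : τ a % N = τ b % N := by rw [h]
    simpa [hτ, Nat.add_mul_mod_self_right, Nat.mod_eq_of_lt (heb a), Nat.mod_eq_of_lt (heb b)]
      using this
  have hτlt : ∀ {a b}, τ a < τ b → σQ (blk a) ≤ σQ (blk b) := by
    intro a b h
    by_contra hlt
    push_neg at hlt
    have : σQ (blk b) + 1 ≤ σQ (blk a) := hlt
    have : τ b < τ a := by
      calc τ b = e b + σQ (blk b) * N := rfl
        _ < N + σQ (blk b) * N := by have := heb b; omega
        _ = (σQ (blk b) + 1) * N := by ring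
        _ ≤ σQ (blk a) * N := Nat.mul_le_mul_right _ this
        _ ≤ τ a := Nat.le_add_left _ _
    omega
  -- conclude
  refine le_trans (Nat.sInf_le ⟨τ, hτinj, rfl⟩) ?_
  refine csSup_le ⟨1 + {v | H.Adj hV.some v ∧ τ v < τ hV.some}.ncard, hV.some, rfl⟩ ?_
  rintro n ⟨u, rfl⟩
  set S : Set V := {v | H.Adj u v ∧ τ v < τ u} with hS
  set B : ↥𝒳 := blk u with hB
  set T : Set ↥𝒳 := {A | (quotGraph H 𝒳).Adj B A ∧ σQ A < σQ B} with hT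
  -- blocks of back-neighbors land in insert B T
  have hmaps : ∀ v ∈ insert u S, blk v ∈ insert B T := by
    rintro v hv
    rcases hv with rfl | hv
    · exact mem_insert _ _
    · obtain ⟨hadj, hlt⟩ := hv
      by_cases hvB : blk v = B
      · rw [hvB]; exact mem_insert _ _
      · refine mem_insert_of_mem _ ⟨⟨Ne.symm hvB, u, hmemblk u, v, hmemblk v, hadj⟩, ?_⟩
        have := hτlt hlt
        exact lt_of_le_of_ne this (fun h => hvB (hσQinj h))
  have huS : u ∉ S := fun h => H.loopless.irrefl u h.1
  have hBT : B ∉ T := fun h => (quotGraph H 𝒳).loopless.irrefl B h.1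
  have h1 : (insert u S).ncard = 1 + S.ncard := by
    rw [Set.ncard_insert_of_notMem huS (Set.toFinite S)]; omega
  have h2 : (insert B T).ncard = 1 + T.ncard := by
    rw [Set.ncard_insert_of_notMem hBT (Set.toFinite T)]; omega
  have hfiber : ∀ b : ↥𝒳, {a | a ∈ insert u S ∧ blk a = b}.ncard ≤ m := by
    intro b
    have hsub : {a | a ∈ insert u S ∧ blk a = b} ⊆ (b : Set V) := by
      rintro a ⟨-, rfl⟩; exact hmemblk a
    exact le_trans (Set.ncard_le_ncard hsub (Set.toFinite _)) (hm b b.2)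
  have hcount : (insert u S).ncard ≤ m * (insert B T).ncard :=
    aux_ncard_le_mul _ blk _ hmaps m hfiber
  have hTc : 1 + T.ncard ≤ c := by
    refine le_trans ?_ hcolQ
    refine le_csSup ?_ ⟨B, rfl⟩
    refine ⟨1 + Nat.card ↥𝒳, ?_⟩
    rintro k ⟨A, rfl⟩
    have : {Bb | (quotGraph H 𝒳).Adj A Bb ∧ σQ Bb < σQ A}.ncard ≤ Nat.card ↥𝒳 := by
      rw [← Set.ncard_univ]
      exact Set.ncard_le_ncard (Set.subset_univ _) (Set.toFinite _)
    omega
  calc 1 + S.ncard = (insert u S).ncard := h1.symm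
    _ ≤ m * (insert B T).ncard := hcount
    _ = m * (1 + T.ncard) := by rw [h2]
    _ ≤ m * c := Nat.mul_le_mul_left _ hTc
    _ = c * m := Nat.mul_comm _ _
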